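/- Let 𝔊 be a finite connected symmetric graph without loops and dead ends, with space 𝔓₊ of geodesic rays, transfer operator (ℒf)(e₁,e₂,…) = Σ_{e₀: τ(e₀)=ι(e₁), ι(e₀)≠τ(e₁)} f(e₀,e₁,e₂,…) acting on locally constant functions, and edge Laplacian Δ_𝔈. Then for every z ≠ 0, the eigenspace {ℒ_lc = z} of the transfer operator on locally constant functions is linearly isomorphic to the eigenspace {Δ_𝔈 = z} on ℂ^𝔈. -/

import Mathlib

variable {V : Type*} [Fintype V] [DecidableEq V] (G : SimpleGraph V) [DecidableRel G.Adj]

/-- The set of directed edges of a graph: ordered pairs of adjacent vertices. -/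
abbrev DirEdge := {p : V × V // G.Adj p.1 p.2}

/-- A geodesic ray: an infinite non-backtracking path of directed edges
(`τ(e_j) = ι(e_{j+1})` and `τ(e_{j+1}) ≠ ι(e_j)`). -/
def IsRay (r : ℕ → DirEdge G) : Prop :=
  ∀ n, (r (n + 1)).1.1 = (r n).1.2 ∧ (r (n + 1)).1.2 ≠ (r n).1.1

/-- The space `𝔓₊` of geodesic rays. -/
def RaySp := {r : ℕ → DirEdge G // IsRay G r}

/-- Prepending an edge to a sequence of edges. -/
def cons (e : DirEdge G) (r : ℕ → DirEdge G) : ℕ → DirEdge G :=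
  fun n => Nat.casesOn n e fun k => r k

/-- The transfer operator of the geodesic flow:
`(ℒf)(e₁,e₂,…) = Σ_{e₀ : τ(e₀)=ι(e₁), ι(e₀)≠τ(e₁)} f(e₀,e₁,e₂,…)`. -/
noncomputable def transfer (f : RaySp G → ℂ) (ρ : RaySp G) : ℂ :=
  ∑ e : DirEdge G,
    if h : e.1.2 = (ρ.1 0).1.1 ∧ e.1.1 ≠ (ρ.1 0).1.2 then
      f ⟨cons G e ρ.1, by
        intro n
        cases n with
        | zero => exact ⟨h.1.symm, fun hh => h.2 hh.symm⟩
        | succ k => exact ρ.2 k⟩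
    else 0

/-- A function on the space of geodesic rays is *locally constant* (for the natural
cylinder topology) iff it only depends on finitely many initial edges. -/
def LocConst (f : RaySp G → ℂ) : Prop :=
  ∃ N : ℕ, ∀ ρ ρ' : RaySp G, (∀ n < N, ρ.1 n = ρ'.1 n) → f ρ = f ρ'

lemma transfer_add (f g : RaySp G → ℂ) (ρ : RaySp G) :
    transfer G (f + g) ρ = transfer G f ρ + transfer G g ρ := by
  unfold transfer
  rw [← Finset.sum_add_distrib]
  refine Finset.sum_congr rfl fun e _ => ?_
  by_cases h : e.1.2 = (ρ.1 0).1.1 ∧ e.1.1 ≠ (ρ.1 0).1.2 <;> simp [h] <;> rfl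

lemma transfer_smul (c : ℂ) (f : RaySp G → ℂ) (ρ : RaySp G) :
    transfer G (c • f) ρ = c * transfer G f ρ := by
  unfold transfer
  rw [Finset.mul_sum]
  refine Finset.sum_congr rfl fun e _ => ?_
  by_cases h : e.1.2 = (ρ.1 0).1.1 ∧ e.1.1 ≠ (ρ.1 0).1.2 <;> simp [h] <;> rfl

/-- The eigenspace `{ℒ_lc = z}` of the transfer operator acting on locally constant
functions on the space of geodesic rays. -/
noncomputable def transferEig (z : ℂ) : Submodule ℂ (RaySp G → ℂ) where
  carrier := {f | LocConst G f ∧ ∀ ρ, transfer G f ρ = z * f ρ}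
  add_mem' := by
    rintro f g ⟨⟨N₁, hf⟩, hfe⟩ ⟨⟨N₂, hg⟩, hge⟩
    refine ⟨⟨max N₁ N₂, fun ρ ρ' h => ?_⟩, fun ρ => ?_⟩
    · simp only [Pi.add_apply]
      rw [hf ρ ρ' fun n hn => h n (lt_of_lt_of_le hn (le_max_left _ _)),
        hg ρ ρ' fun n hn => h n (lt_of_lt_of_le hn (le_max_right _ _))]
    · rw [transfer_add, hfe, hge, Pi.add_apply, mul_add]
  zero_mem' := by
    refine ⟨⟨0, fun ρ ρ' _ => rfl⟩, fun ρ => ?_⟩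
    show transfer G 0 ρ = z * 0
    rw [mul_zero]
    exact Finset.sum_eq_zero fun e _ => by split <;> rfl
  smul_mem' := by
    rintro c f ⟨⟨N, hf⟩, hfe⟩
    refine ⟨⟨N, fun ρ ρ' h => ?_⟩, fun ρ => ?_⟩
    · simp only [Pi.smul_apply, smul_eq_mul]
      rw [hf ρ ρ' h]
    · rw [transfer_smul, hfe, Pi.smul_apply, smul_eq_mul]; ring

/-- The edge Laplacian `Δ_𝔈 f (e) = Σ_{e' : ι(e') = τ(e), τ(e') ≠ ι(e)} f e'`. -/
noncomputable def edgeLaplacian : (DirEdge G → ℂ) →ₗ[ℂ] (DirEdge G → ℂ) where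
  toFun f e := ∑ e' ∈ Finset.univ.filter
    (fun e' : DirEdge G => e'.1.1 = e.1.2 ∧ e'.1.2 ≠ e.1.1), f e'
  map_add' f g := by funext e; simp [Finset.sum_add_distrib]
  map_smul' c f := by funext e; simp [Finset.mul_sum]

/-- Reversal of a directed edge. -/
def rev (e : DirEdge G) : DirEdge G := ⟨(e.1.2, e.1.1), e.2.symm⟩

@[simp] lemma rev_rev (e : DirEdge G) : rev G (rev G e) = e := rfl

lemma exists_next (hdeg : ∀ x : V, 1 < G.degree x) (e : DirEdge G) :
    ∃ e' : DirEdge G, e'.1.1 = e.1.2 ∧ e'.1.2 ≠ e.1.1 := by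
  have h1 : 1 < (G.neighborFinset e.1.2).card := by
    rw [G.card_neighborFinset_eq_degree]; exact hdeg _
  obtain ⟨w, hw, hne⟩ := Finset.exists_mem_ne h1 e.1.1
  rw [SimpleGraph.mem_neighborFinset] at hw
  exact ⟨⟨(e.1.2, w), hw⟩, rfl, hne⟩

/-- Eigenfunctions of the transfer operator (for nonzero eigenvalue) that are
locally constant depend only on the first edge. -/
lemma eig_depends_on_first {z : ℂ} (hz : z ≠ 0) (f : RaySp G → ℂ)
    (hf : LocConst G f) (heig : ∀ ρ, transfer G f ρ = z * f ρ) :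
    ∀ ρ ρ' : RaySp G, ρ.1 0 = ρ'.1 0 → f ρ = f ρ' := by
  obtain ⟨N, hN⟩ := hf
  have step : ∀ M : ℕ, (∀ ρ ρ' : RaySp G, (∀ n < M + 2, ρ.1 n = ρ'.1 n) → f ρ = f ρ') →
      (∀ ρ ρ' : RaySp G, (∀ n < M + 1, ρ.1 n = ρ'.1 n) → f ρ = f ρ') := by
    intro M hB ρ ρ' hagree
    have h0 : ρ.1 0 = ρ'.1 0 := hagree 0 (Nat.succ_pos M)
    have hT : transfer G f ρ = transfer G f ρ' := by
      unfold transfer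
      refine Finset.sum_congr rfl fun e _ => ?_
      by_cases hc : e.1.2 = (ρ.1 0).1.1 ∧ e.1.1 ≠ (ρ.1 0).1.2
      · have hc' : e.1.2 = (ρ'.1 0).1.1 ∧ e.1.1 ≠ (ρ'.1 0).1.2 := by rw [← h0]; exact hc
        rw [dif_pos hc, dif_pos hc']
        apply hB
        intro n hn
        cases n with
        | zero => rfl
        | succ k => exact hagree k (by omega)
      · rw [dif_neg hc, dif_neg (by rw [← h0]; exact hc)]
    exact mul_left_cancel₀ hz (by rw [← heig ρ, ← heig ρ', hT])
  have key : ∀ M : ℕ, (∀ ρ ρ' : RaySp G, (∀ n < M + 1, ρ.1 n = ρ'.1 n) → f ρ = f ρ') →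
      ∀ ρ ρ' : RaySp G, ρ.1 0 = ρ'.1 0 → f ρ = f ρ' := by
    intro M
    induction M with
    | zero =>
      intro h ρ ρ' h0
      refine h ρ ρ' fun n hn => ?_
      interval_cases n
      exact h0
    | succ k ih => intro h; exact ih (step k h)
  exact key N fun ρ ρ' h => hN ρ ρ' fun n hn => h n (by omega)

/-- **Quantum–classical correspondence for finite graphs (all nonzero spectral
parameters).**  For a finite connected (symmetric, loopless) graph without dead ends
and every `z ≠ 0`, the eigenspace `{ℒ_lc = z}` of the transfer operator on locally
constant functions on the space of geodesic rays is linearly isomorphic to the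
eigenspace `{Δ_𝔈 = z}` of the edge Laplacian. -/
theorem transfer_eigenspace_iso_edge_laplacian_eigenspace
    (hconn : G.Connected) (hdeg : ∀ x : V, 1 < G.degree x) :
    ∀ z : ℂ, z ≠ 0 →
      Nonempty (↥(transferEig G z) ≃ₗ[ℂ]
        ↥(Module.End.eigenspace (edgeLaplacian G) z)) := by
  intro z hz
  classical
  choose nxt hnxt using exists_next G hdeg
  -- the canonical ray starting at a given edge
  let rayF : DirEdge G → RaySp G := fun e =>
    ⟨fun n => Nat.rec e (fun _ p => nxt p) n, fun n => hnxt _⟩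
  have rayF0 : ∀ e, (rayF e).1 0 = e := fun e => rfl
  -- transfer of a function of the first edge
  have transfer_first : ∀ (F : DirEdge G → ℂ) (ρ : RaySp G),
      transfer G (fun σ => F (σ.1 0)) ρ =
        ∑ e ∈ Finset.univ.filter
          (fun e : DirEdge G => e.1.2 = (ρ.1 0).1.1 ∧ e.1.1 ≠ (ρ.1 0).1.2), F e := by
    intro F ρ
    unfold transfer
    rw [Finset.sum_filter]
    refine Finset.sum_congr rfl fun e _ => ?_
    by_cases hc : e.1.2 = (ρ.1 0).1.1 ∧ e.1.1 ≠ (ρ.1 0).1.2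
    · rw [dif_pos hc, if_pos hc]
      rfl
    · rw [dif_neg hc, if_neg hc]
  have transfer_congr : ∀ (f g : RaySp G → ℂ), (∀ ρ, f ρ = g ρ) →
      ∀ ρ, transfer G f ρ = transfer G g ρ := by
    intro f g h ρ
    unfold transfer
    refine Finset.sum_congr rfl fun e _ => ?_
    by_cases hc : e.1.2 = (ρ.1 0).1.1 ∧ e.1.1 ≠ (ρ.1 0).1.2
    · rw [dif_pos hc, dif_pos hc]; exact h _
    · rw [dif_neg hc, dif_neg hc]
  -- reindexing a sum via edge reversal
  have reindex : ∀ (F : DirEdge G → ℂ) (x y : V),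
      ∑ e ∈ Finset.univ.filter (fun e : DirEdge G => e.1.2 = x ∧ e.1.1 ≠ y), F e =
      ∑ e ∈ Finset.univ.filter (fun e : DirEdge G => e.1.1 = x ∧ e.1.2 ≠ y),
        F (rev G e) := by
    intro F x y
    refine Finset.sum_nbij' (i := rev G) (j := rev G) ?_ ?_ ?_ ?_ ?_
    · intro a ha
      simp only [Finset.mem_filter, Finset.mem_univ, true_and] at ha ⊢
      exact ha
    · intro a ha
      simp only [Finset.mem_filter, Finset.mem_univ, true_and] at ha ⊢
      exact ha
    · intro a _; exact rev_rev G a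
    · intro a _; exact rev_rev G a
    · intro a _; rw [rev_rev]
  -- membership of the forward map
  have hΦmem : ∀ f : ↥(transferEig G z),
      (fun e => f.1 (rayF (rev G e))) ∈ Module.End.eigenspace (edgeLaplacian G) z := by
    intro f
    have hf2 : LocConst G f.1 ∧ ∀ ρ, transfer G f.1 ρ = z * f.1 ρ := f.2
    have hfirst := eig_depends_on_first G hz f.1 hf2.1 hf2.2
    rw [Module.End.mem_eigenspace_iff]
    funext e
    show ∑ e' ∈ Finset.univ.filter
        (fun e' : DirEdge G => e'.1.1 = e.1.2 ∧ e'.1.2 ≠ e.1.1),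
        f.1 (rayF (rev G e')) = z * f.1 (rayF (rev G e))
    have h1 : transfer G f.1 (rayF (rev G e)) = z * f.1 (rayF (rev G e)) := hf2.2 _
    rw [transfer_congr _ _ (fun σ => hfirst σ (rayF (σ.1 0)) rfl) _,
      transfer_first (fun e₀ => f.1 (rayF e₀)) (rayF (rev G e))] at h1
    rw [← h1]
    exact (reindex (fun e₀ => f.1 (rayF e₀)) _ _).symm
  -- membership of the backward map
  have hΨmem : ∀ g : ↥(Module.End.eigenspace (edgeLaplacian G) z),
      (fun ρ : RaySp G => g.1 (rev G (ρ.1 0))) ∈ transferEig G z := by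
    intro g
    have hg : edgeLaplacian G g.1 = z • g.1 := Module.End.mem_eigenspace_iff.mp g.2
    refine ⟨⟨1, fun ρ ρ' h =>
      congrArg (fun x => g.1 (rev G x)) (h 0 (by omega))⟩, fun ρ => ?_⟩
    show transfer G (fun ρ : RaySp G => g.1 (rev G (ρ.1 0))) ρ = z * g.1 (rev G (ρ.1 0))
    have h2 : ∑ e' ∈ Finset.univ.filter
        (fun e' : DirEdge G => e'.1.1 = (ρ.1 0).1.1 ∧ e'.1.2 ≠ (ρ.1 0).1.2),
        g.1 e' = z * g.1 (rev G (ρ.1 0)) := congrFun hg (rev G (ρ.1 0))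
    rw [transfer_first (fun e => g.1 (rev G e)) ρ,
      reindex (fun e => g.1 (rev G e)) (ρ.1 0).1.1 (ρ.1 0).1.2, ← h2]
    exact Finset.sum_congr rfl fun e' _ => by rw [rev_rev]
  refine ⟨{ toFun := fun f => ⟨fun e => f.1 (rayF (rev G e)), hΦmem f⟩
            map_add' := ?_
            map_smul' := ?_
            invFun := fun g => ⟨fun ρ => g.1 (rev G (ρ.1 0)), hΨmem g⟩
            left_inv := ?_
            right_inv := ?_ }⟩
  · intro f g; ext e; rfl
  · intro c f; ext e; rfl
  · intro f
    have hf2 : LocConst G f.1 ∧ ∀ ρ, transfer G f.1 ρ = z * f.1 ρ := f.2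
    have hfirst := eig_depends_on_first G hz f.1 hf2.1 hf2.2
    ext ρ
    exact hfirst (rayF (rev G (rev G (ρ.1 0)))) ρ rfl
  · intro g
    ext e
    rfl
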